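/- (Basic Perturbation Lemma, part 4.) Under the perturbation setup, the perturbed projection and inclusion satisfy f_δ ∘ g_δ = id_M. -/

import Mathlib

open LinearMap

lemma my_comp_sum {R N M : Type*} [CommRing R] [AddCommGroup N] [Module R N]
    [AddCommGroup M] [Module R M] (h : N →ₗ[R] M) (s : Finset ℕ) (p : ℕ → (N →ₗ[R] N)) :
    h ∘ₗ (∑ i ∈ s, p i) = ∑ i ∈ s, h ∘ₗ p i := by
  ext x; simp

/-- Basic Perturbation Lemma, part 4: `f_δ ∘ g_δ = id`. -/
theorem bpl_fδ_gδ
    (R : Type*) [CommRing R] (N M : Type*)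
    [AddCommGroup N] [Module R N] [AddCommGroup M] [Module R M]
    (dN : N →ₗ[R] N) (dM : M →ₗ[R] M)
    (hdN : dN ∘ₗ dN = 0) (hdM : dM ∘ₗ dM = 0)
    (f : N →ₗ[R] M) (g : M →ₗ[R] N) (φ : N →ₗ[R] N)
    (hf : f ∘ₗ dN = dM ∘ₗ f) (hg : g ∘ₗ dM = dN ∘ₗ g)
    (hfg : f ∘ₗ g = LinearMap.id)
    (hhom : φ ∘ₗ dN + dN ∘ₗ φ + g ∘ₗ f = LinearMap.id)
    (hfφ : f ∘ₗ φ = 0) (hφg : φ ∘ₗ g = 0) (hφφ : φ ∘ₗ φ = 0)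
    (δ : N →ₗ[R] N) (hδ : (dN + δ) ∘ₗ (dN + δ) = 0)
    (n : ℕ) (hnil : (φ ∘ₗ δ) ^ n = 0) :
    (f ∘ₗ (LinearMap.id - δ ∘ₗ (∑ i ∈ Finset.range n, ((-1 : R) ^ i • (φ ∘ₗ δ) ^ i)) ∘ₗ φ)) ∘ₗ ((∑ i ∈ Finset.range n, ((-1 : R) ^ i • (φ ∘ₗ δ) ^ i)) ∘ₗ g) = LinearMap.id := by
  cases n with
  | zero =>
      have hid : (LinearMap.id : N →ₗ[R] N) = 0 := by simpa [Module.End.one_eq_id] using hnil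
      have hM : (LinearMap.id : M →ₗ[R] M) = 0 := by
        ext m
        have h0 : g m = 0 := by
          have := LinearMap.ext_iff.mp hid (g m); simpa using this
        have := LinearMap.ext_iff.mp hfg m
        simp only [LinearMap.comp_apply, LinearMap.id_apply] at this ⊢
        rw [← this, h0, map_zero]; simp
      simp [hM]
  | succ n =>
      set S : N →ₗ[R] N := ∑ i ∈ Finset.range (n+1), ((-1 : R) ^ i • (φ ∘ₗ δ) ^ i) with hS
      have hfpow : ∀ i, f ∘ₗ (φ ∘ₗ δ) ^ (i+1) = 0 := by
        intro i
        rw [pow_succ', Module.End.mul_eq_comp, ← LinearMap.comp_assoc,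
          ← LinearMap.comp_assoc, hfφ, LinearMap.zero_comp, LinearMap.zero_comp]
      have hφpow : ∀ i, φ ∘ₗ (φ ∘ₗ δ) ^ (i+1) = 0 := by
        intro i
        rw [pow_succ', Module.End.mul_eq_comp, ← LinearMap.comp_assoc,
          ← LinearMap.comp_assoc, hφφ, LinearMap.zero_comp, LinearMap.zero_comp]
      have h1 : f ∘ₗ S = f := by
        rw [hS, my_comp_sum, Finset.sum_range_succ']
        simp [LinearMap.comp_smul, hfpow, Module.End.one_eq_id]
      have h2 : φ ∘ₗ S = φ := by
        rw [hS, my_comp_sum, Finset.sum_range_succ']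
        simp [LinearMap.comp_smul, hφpow, Module.End.one_eq_id]
      have h3 : φ ∘ₗ (S ∘ₗ g) = 0 := by
        rw [← LinearMap.comp_assoc, h2, hφg]
      calc (f ∘ₗ (LinearMap.id - δ ∘ₗ S ∘ₗ φ)) ∘ₗ (S ∘ₗ g)
          = f ∘ₗ (S ∘ₗ g) - f ∘ₗ (δ ∘ₗ (S ∘ₗ (φ ∘ₗ (S ∘ₗ g)))) := by
            rw [LinearMap.comp_sub, LinearMap.sub_comp, LinearMap.comp_id]
            simp only [LinearMap.comp_assoc]
        _ = LinearMap.id := by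
            rw [h3]
            simp only [LinearMap.comp_zero]
            rw [← LinearMap.comp_assoc, h1, hfg, sub_zero]
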